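/- Let p ∈ [1, 2) and define f_p: T → R on the unit circle by f_p(z) = |(z−1)/2|^p. Then every Fourier coefficient of f_p is nonzero: the 0-th Fourier coefficient ∫_T f_p dλ is strictly positive, and for every nonzero integer n, the n-th Fourier coefficient is strictly negative. -/

import Mathlib

open MeasureTheory

/-- The `n`-th Fourier coefficient of a function on the unit circle,
written in the angular variable: `c_n = (1/(2π)) ∫_0^{2π} f(e^{iθ}) e^{-inθ} dθ`,
i.e. the integral of `f(z) z^{-n}` against the normalized Haar measure of the circle. -/
noncomputable def circleFourierCoeff (f : ℂ → ℝ) (n : ℤ) : ℂ :=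
  (1 / (2 * Real.pi) : ℂ) *
    ∫ θ in (0:ℝ)..(2 * Real.pi),
      (f (Complex.exp (θ * Complex.I)) : ℂ) * Complex.exp (-(n : ℂ) * θ * Complex.I)

noncomputable def binCoef (s : ℝ) : ℕ → ℝ
  | 0 => 1
  | (k+1) => binCoef s k * (s - k) / (k + 1)

lemma binCoef_zero (s : ℝ) : binCoef s 0 = 1 := rfl
lemma binCoef_succ (s : ℝ) (k : ℕ) :
    binCoef s (k+1) = binCoef s k * (s - k) / (k + 1) := rfl

variable {s : ℝ} (hs0 : 0 < s) (hs1 : s < 1)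

lemma binCoef_sign (hs0 : 0 < s) (hs1 : s < 1) :
    ∀ k, 1 ≤ k → (-1:ℝ)^k * binCoef s k < 0 := by
  intro k hk
  induction k with
  | zero => omega
  | succ k ih =>
    rcases Nat.eq_or_lt_of_le hk with h | h
    · simp [← h, binCoef_succ, binCoef_zero]
      positivity
    · have hk1 : 1 ≤ k := by omega
      have h1 := ih hk1
      have h2 : (0:ℝ) < ((k:ℝ) - s) / (k+1) := by
        apply div_pos
        · have : (1:ℝ) ≤ (k:ℝ) := by exact_mod_cast hk1
          linarith
        · positivity
      have : (-1:ℝ)^(k+1) * binCoef s (k+1)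
          = ((-1:ℝ)^k * binCoef s k) * (((k:ℝ) - s)/(k+1)) := by
        rw [binCoef_succ]; ring
      rw [this]
      exact mul_neg_of_neg_of_pos h1 h2

noncomputable def QProd (s : ℝ) (N : ℕ) : ℝ :=
  ∏ j ∈ Finset.range N, (((j:ℝ) + 1 - s) / ((j:ℝ) + 1))

lemma QProd_nonneg (hs1 : s < 1) (N : ℕ) : 0 ≤ QProd s N := by
  apply Finset.prod_nonneg
  intro j _
  apply div_nonneg
  · have : (0:ℝ) ≤ (j:ℝ) := Nat.cast_nonneg j
    linarith
  · positivity

lemma abs_binCoef_succ (hs0 : 0 < s) (hs1 : s < 1) (N : ℕ) :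
    |binCoef s (N+1)| = s * QProd s N / (N + 1) := by
  induction N with
  | zero =>
    simp [binCoef_succ, binCoef_zero, QProd, abs_of_pos hs0]
  | succ N ih =>
    have hQ : QProd s (N+1) = QProd s N * (((N:ℝ) + 1 - s)/((N:ℝ)+1)) := by
      rw [QProd, Finset.prod_range_succ]; rfl
    have habs : |s - ((N:ℝ)+1)| = (N:ℝ) + 1 - s := by
      rw [abs_of_nonpos (by linarith [Nat.cast_nonneg (α := ℝ) N])]; ring
    rw [binCoef_succ, abs_div, abs_mul]
    push_cast
    rw [ih, habs, hQ]
    have h1 : (0:ℝ) < (N:ℝ) + 1 := by positivity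
    have h2 : (0:ℝ) < (N:ℝ) + 1 + 1 := by positivity
    rw [abs_of_pos (by positivity)]
    field_simp

lemma sum_abs_binCoef (hs0 : 0 < s) (hs1 : s < 1) (N : ℕ) :
    ∑ k ∈ Finset.range N, |binCoef s (k+1)| = 1 - QProd s N := by
  induction N with
  | zero => simp [QProd]
  | succ N ih =>
    rw [Finset.sum_range_succ, ih, abs_binCoef_succ hs0 hs1]
    have hQ : QProd s (N+1) = QProd s N * (((N:ℝ) + 1 - s)/((N:ℝ)+1)) := by
      rw [QProd, Finset.prod_range_succ]; rfl
    rw [hQ]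
    have h1 : (0:ℝ) < (N:ℝ) + 1 := by positivity
    field_simp
    ring

lemma summable_abs_binCoef (hs0 : 0 < s) (hs1 : s < 1) :
    Summable (fun k => |binCoef s k|) := by
  rw [← summable_nat_add_iff 1]
  apply summable_of_sum_range_le (c := 1) (fun n => abs_nonneg _)
  intro n
  rw [sum_abs_binCoef hs0 hs1]
  have := QProd_nonneg hs1 n
  linarith

lemma abs_binCoef_le_one (hs0 : 0 < s) (hs1 : s < 1) (k : ℕ) :
    |binCoef s k| ≤ 1 := by
  cases k with
  | zero => simp [binCoef_zero]
  | succ k =>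
    have h := sum_abs_binCoef hs0 hs1 (k+1)
    have h2 := QProd_nonneg hs1 (k+1)
    have h3 : |binCoef s (k+1)| ≤ ∑ j ∈ Finset.range (k+1), |binCoef s (j+1)| := by
      apply Finset.single_le_sum (f := fun j => |binCoef s (j+1)|)
        (fun j _ => abs_nonneg _)
      simp
    linarith

open intervalIntegral in
example : True := trivial

section FTC
variable {s : ℝ}

lemma one_add_pos_of_mem {x t : ℝ} (hx : |x| < 1) (ht : t ∈ Set.uIcc 0 x) :
    0 < 1 + t := by
  rcases Set.mem_uIcc.1 ht with ⟨h1, h2⟩ | ⟨h1, h2⟩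
  · linarith
  · have : -|x| ≤ x := neg_abs_le x
    have : -x ≤ |x| := neg_le_abs x
    nlinarith [abs_nonneg x]

lemma ftc_step (hs0 : 0 < s) {x : ℝ} (hx : |x| < 1) (N : ℕ) :
    ∫ t in (0:ℝ)..x, (((N:ℝ)+1) * t^N * (1+t)^(-s-1)
        + (((N:ℝ)+1) - s) * t^(N+1) * (1+t)^(-s-1))
      = x^(N+1) * (1+x)^(-s) := by
  have key : ∀ t ∈ Set.uIcc (0:ℝ) x,
      HasDerivAt (fun u => u^(N+1) * (1+u)^(-s))
        (((N:ℝ)+1) * t^N * (1+t)^(-s-1) + (((N:ℝ)+1) - s) * t^(N+1) * (1+t)^(-s-1)) t := by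
    intro t ht
    have hpos := one_add_pos_of_mem hx ht
    have h1 : HasDerivAt (fun u : ℝ => u^(N+1)) (((N:ℝ)+1) * t^N) t := by
      simpa using hasDerivAt_pow (N+1) t
    have h2 : HasDerivAt (fun u : ℝ => (1+u)^(-s)) ((-s) * (1+t)^(-s-1) * 1) t := by
      have := (HasDerivAt.const_add 1 (hasDerivAt_id t)).rpow_const
        (p := -s) (Or.inl hpos.ne')
      simpa [mul_comm] using this
    have h3 := h1.mul h2
    refine h3.congr_deriv ?_
    have hsplit : (1+t)^(-s) = (1+t)^(-s-1) * (1+t) := by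
      nth_rewrite 3 [← Real.rpow_one (1+t)]
      rw [← Real.rpow_add hpos]
      norm_num
    rw [hsplit]
    ring
  rw [intervalIntegral.integral_eq_sub_of_hasDerivAt key]
  · norm_num
  · apply ContinuousOn.intervalIntegrable
    apply ContinuousOn.add
    · apply ContinuousOn.mul
      · fun_prop
      · apply ContinuousOn.rpow_const
        · fun_prop
        · intro t ht
          exact Or.inl (one_add_pos_of_mem hx ht).ne'
    · apply ContinuousOn.mul
      · fun_prop
      · apply ContinuousOn.rpow_const
        · fun_prop
        · intro t ht
          exact Or.inl (one_add_pos_of_mem hx ht).ne'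

lemma ftc_base (hs0 : 0 < s) {x : ℝ} (hx : |x| < 1) :
    ∫ t in (0:ℝ)..x, (1+t)^(-s-1) = ((1+x)^(-s) - 1) / (-s) := by
  have key : ∀ t ∈ Set.uIcc (0:ℝ) x,
      HasDerivAt (fun u : ℝ => (1+u)^(-s) / (-s)) ((1+t)^(-s-1)) t := by
    intro t ht
    have hpos := one_add_pos_of_mem hx ht
    have h2 : HasDerivAt (fun u : ℝ => (1+u)^(-s)) ((-s) * (1+t)^(-s-1) * 1) t := by
      have := (HasDerivAt.const_add 1 (hasDerivAt_id t)).rpow_const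
        (p := -s) (Or.inl hpos.ne')
      simpa [mul_comm] using this
    have := h2.div_const (-s)
    refine this.congr_deriv ?_
    have hs : s ≠ 0 := hs0.ne'
    field_simp
  rw [intervalIntegral.integral_eq_sub_of_hasDerivAt key]
  · have hs : (-s) ≠ 0 := by linarith
    field_simp
    rw [add_zero, Real.one_rpow]
    ring
  · apply ContinuousOn.intervalIntegrable
    apply ContinuousOn.rpow_const
    · fun_prop
    · intro t ht
      exact Or.inl (one_add_pos_of_mem hx ht).ne'

end FTC

lemma intble_w (hs0 : 0 < s) {x : ℝ} (hx : |x| < 1) (N : ℕ) :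
    IntervalIntegrable (fun t => t^N * (1+t)^(-s-1)) MeasureTheory.volume 0 x := by
  apply ContinuousOn.intervalIntegrable
  apply ContinuousOn.mul
  · fun_prop
  · apply ContinuousOn.rpow_const
    · fun_prop
    · intro t ht
      exact Or.inl (one_add_pos_of_mem hx ht).ne'

lemma partial_sum_eq (hs0 : 0 < s) (hs1 : s < 1) {x : ℝ} (hx : |x| < 1) (N : ℕ) :
    ∑ k ∈ Finset.range (N+1), binCoef s k * x ^ k
      = (1+x)^s * (1 + ((N:ℝ) - s) * binCoef s N *
          ∫ t in (0:ℝ)..x, t^N * (1+t)^(-s-1)) := by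
  have hpos : (0:ℝ) < 1 + x := by
    have := neg_abs_le x; linarith
  have hcancel : (1+x)^s * (1+x)^(-s) = 1 := by
    rw [← Real.rpow_add hpos]; norm_num
  induction N with
  | zero =>
    simp only [Finset.range_one, Finset.sum_singleton, binCoef_zero, pow_zero, mul_one,
      Nat.cast_zero, one_mul, zero_add]
    rw [ftc_base hs0 hx, zero_sub]
    have hs : s ≠ 0 := hs0.ne'
    have h1 : -s * (((1+x)^(-s) - 1) / (-s)) = (1+x)^(-s) - 1 := by field_simp
    rw [h1]
    linear_combination -hcancel
  | succ N ih =>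
    rw [Finset.sum_range_succ, ih]
    have hrec : ((N:ℝ) - s) * binCoef s N = -(((N:ℝ)+1) * binCoef s (N+1)) := by
      rw [binCoef_succ]
      have : ((N:ℝ)+1) ≠ 0 := by positivity
      field_simp
      ring
    have hsplit : (fun t : ℝ => t^(N+1) * (1+t)^(-s-1))
        = fun t => ((((N:ℝ)+1) * t^N * (1+t)^(-s-1)
            + (((N:ℝ)+1) - s) * t^(N+1) * (1+t)^(-s-1)) - ((N:ℝ)+1) * (t^N * (1+t)^(-s-1)))
            / (((N:ℝ)+1) - s) := by
      funext t
      have h2 : ((N:ℝ)+1) - s ≠ 0 := by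
        have : (0:ℝ) ≤ (N:ℝ) := Nat.cast_nonneg N
        intro h; nlinarith
      field_simp
      ring
    have hint : ∫ t in (0:ℝ)..x, t^(N+1) * (1+t)^(-s-1)
        = (x^(N+1) * (1+x)^(-s) - ((N:ℝ)+1) * ∫ t in (0:ℝ)..x, t^N * (1+t)^(-s-1))
          / (((N:ℝ)+1) - s) := by
      rw [hsplit]
      rw [intervalIntegral.integral_div]
      rw [intervalIntegral.integral_sub]
      · rw [ftc_step hs0 hx N, intervalIntegral.integral_const_mul]
      · have := (intble_w hs0 hx N).const_mul ((N:ℝ)+1)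
        have h2 := (intble_w hs0 hx (N+1)).const_mul (((N:ℝ)+1) - s)
        have h3 : (fun t : ℝ => (((N:ℝ)+1) * t^N * (1+t)^(-s-1)
            + (((N:ℝ)+1) - s) * t^(N+1) * (1+t)^(-s-1)))
            = (fun t => ((N:ℝ)+1) * (t^N * (1+t)^(-s-1)))
              + (fun t => (((N:ℝ)+1) - s) * (t^(N+1) * (1+t)^(-s-1))) := by
          funext t; simp; ring
        rw [h3]
        exact this.add h2
      · exact (intble_w hs0 hx N).const_mul ((N:ℝ)+1)
    rw [hint, hrec]
    have h2 : ((N:ℝ)+1) - s ≠ 0 := by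
      have : (0:ℝ) ≤ (N:ℝ) := Nat.cast_nonneg N
      intro h; nlinarith
    set J := ∫ t in (0:ℝ)..x, t^N * (1+t)^(-s-1) with hJ
    set a := binCoef s (N+1) with ha
    push_cast
    have key : ((N:ℝ) + 1 - s) * a * ((x ^ (N + 1) * (1 + x) ^ (-s) - ((N:ℝ) + 1) * J)
          / ((N:ℝ) + 1 - s))
        = a * (x ^ (N + 1) * (1 + x) ^ (-s)) - a * ((N:ℝ) + 1) * J := by
      field_simp
    rw [key]
    linear_combination (-(a * x^(N+1))) * hcancel

lemma binomial_summable (hs0 : 0 < s) (hs1 : s < 1) {x : ℝ} (hx : |x| < 1) :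
    Summable (fun k => binCoef s k * x ^ k) := by
  apply Summable.of_norm_bounded (summable_abs_binCoef hs0 hs1)
  intro k
  rw [norm_mul, norm_pow]
  have h1 : ‖x‖^k ≤ 1 := pow_le_one₀ (norm_nonneg x) (le_of_lt hx)
  have h2 : ‖binCoef s k‖ = |binCoef s k| := rfl
  nlinarith [abs_nonneg (binCoef s k), norm_nonneg x, pow_nonneg (norm_nonneg x) k]

lemma binomial_hasSum (hs0 : 0 < s) (hs1 : s < 1) {x : ℝ} (hx : |x| < 1) :
    HasSum (fun k => binCoef s k * x ^ k) ((1+x)^s) := by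
  have hsum := binomial_summable hs0 hs1 hx
  have hS := hsum.hasSum
  have tendsto1 : Filter.Tendsto (fun N => ∑ k ∈ Finset.range (N+1), binCoef s k * x ^ k)
      Filter.atTop (nhds (∑' k, binCoef s k * x ^ k)) :=
    hS.tendsto_sum_nat.comp (Filter.tendsto_add_atTop_nat 1)
  have hC : (0:ℝ) < 1 - |x| := by linarith
  set C := (1 - |x|)^(-s-1) with hCdef
  have hCpos : 0 < C := Real.rpow_pos_of_pos hC _
  have hLpos : (0:ℝ) < (1+x)^s := by
    apply Real.rpow_pos_of_pos
    have := neg_abs_le x; linarith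
  -- bound on the integral
  have hint : ∀ N : ℕ, |∫ t in (0:ℝ)..x, t^N * (1+t)^(-s-1)| ≤ |x|^N * C * |x| := by
    intro N
    have := intervalIntegral.norm_integral_le_of_norm_le_const
      (C := |x|^N * C) (f := fun t => t^N * (1+t)^(-s-1)) (a := (0:ℝ)) (b := x) ?_
    · simpa using this
    · intro t ht
      have ht' : t ∈ Set.uIcc (0:ℝ) x := Set.uIoc_subset_uIcc ht
      have habs : |t| ≤ |x| := by
        rcases Set.mem_uIcc.1 ht' with ⟨h1, h2⟩ | ⟨h1, h2⟩
        · rw [abs_of_nonneg h1]; exact h2.trans (le_abs_self x)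
        · rw [abs_of_nonpos h2]; exact (neg_le_neg h1).trans (neg_le_abs x)
      have hpos := one_add_pos_of_mem hx ht'
      have hw : (1+t)^(-s-1) ≤ C := by
        rw [hCdef]
        apply Real.rpow_le_rpow_of_nonpos hC ?_ (by linarith)
        have := neg_le_abs t
        have : -|x| ≤ t := by linarith [habs, neg_abs_le t, abs_le.1 (le_refl |t|)]
        linarith [(abs_le.1 habs).1]
      rw [norm_mul, norm_pow]
      have h1 : ‖t‖^N ≤ |x|^N := pow_le_pow_left₀ (abs_nonneg t) habs N
      have h2 : ‖(1+t)^(-s-1)‖ = (1+t)^(-s-1) := by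
        rw [Real.norm_eq_abs, abs_of_pos (Real.rpow_pos_of_pos hpos _)]
      rw [h2]
      have h3 : (0:ℝ) < (1+t)^(-s-1) := Real.rpow_pos_of_pos hpos _
      nlinarith [pow_nonneg (abs_nonneg x) N]
  -- squeeze
  have haux : Filter.Tendsto
      (fun N : ℕ => (1+x)^s * (((N:ℝ)+1) * (C * |x|^(N+1)))) Filter.atTop (nhds 0) := by
    have h0 := tendsto_pow_const_mul_const_pow_of_abs_lt_one 1 (r := |x|) (by rwa [abs_abs])
    have h1 := (h0.comp (Filter.tendsto_add_atTop_nat 1)).const_mul ((1+x)^s * C)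
    rw [mul_zero] at h1
    convert h1 using 2 with N
    simp [Function.comp]
    push_cast
    ring
  have tendsto0 : Filter.Tendsto
      (fun N => (∑ k ∈ Finset.range (N+1), binCoef s k * x ^ k) - (1+x)^s)
      Filter.atTop (nhds 0) := by
    apply squeeze_zero_norm _ haux
    intro N
    have hps := partial_sum_eq hs0 hs1 hx N
    set J := ∫ t in (0:ℝ)..x, t^N * (1+t)^(-s-1) with hJdef
    have hdiff : ∑ k ∈ Finset.range (N+1), binCoef s k * x ^ k - (1+x)^s
        = (1+x)^s * (((N:ℝ) - s) * binCoef s N * J) := by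
      rw [hps]; ring
    rw [hdiff, norm_mul, norm_mul, norm_mul, Real.norm_eq_abs, Real.norm_eq_abs,
      Real.norm_eq_abs, Real.norm_eq_abs, abs_of_pos hLpos]
    have hN0 : (0:ℝ) ≤ (N:ℝ) := Nat.cast_nonneg N
    have hNs : |(N:ℝ) - s| ≤ (N:ℝ)+1 := by
      rw [abs_le]; constructor <;> linarith
    have hb := abs_binCoef_le_one hs0 hs1 N
    have hJ' : |J| ≤ C * |x|^(N+1) := by
      have := hint N
      rw [pow_succ]
      nlinarith [pow_nonneg (abs_nonneg x) N]
    have hmain : |(N:ℝ) - s| * |binCoef s N| * |J| ≤ ((N:ℝ)+1) * (C * |x|^(N+1)) := by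
      calc |(N:ℝ) - s| * |binCoef s N| * |J|
          ≤ (((N:ℝ)+1) * 1) * (C * |x|^(N+1)) := by
            apply mul_le_mul (mul_le_mul hNs hb (abs_nonneg _) (by positivity)) hJ'
              (abs_nonneg _) (by positivity)
        _ = ((N:ℝ)+1) * (C * |x|^(N+1)) := by ring
    exact mul_le_mul_of_nonneg_left hmain hLpos.le
  have tendsto2 : Filter.Tendsto (fun N => ∑ k ∈ Finset.range (N+1), binCoef s k * x ^ k)
      Filter.atTop (nhds ((1+x)^s)) := by
    have := tendsto0.add_const ((1+x)^s)
    simpa using this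
  have heq : (∑' k, binCoef s k * x ^ k) = (1+x)^s :=
    tendsto_nhds_unique tendsto1 tendsto2
  exact heq ▸ hS

open Complex Real

lemma intExp (m : ℤ) :
    ∫ θ in (0:ℝ)..(2*π), Complex.exp ((m:ℂ) * θ * I)
      = if m = 0 then ((2*π : ℝ) : ℂ) else 0 := by
  split_ifs with h
  · subst h
    simp
  · have hc : (m:ℂ) * I ≠ 0 := by
      simp [Complex.ext_iff]
      exact_mod_cast h
    have : ∀ θ : ℝ, (m:ℂ) * θ * I = ((m:ℂ) * I) * θ := by intro θ; ring
    simp_rw [this]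
    rw [integral_exp_mul_complex hc]
    have h1 : (m:ℂ) * I * (2*π:ℝ) = (m:ℤ) * (2 * π * I) := by push_cast; ring
    rw [h1, Complex.exp_int_mul_two_pi_mul_I]
    simp

noncomputable def muCoef (k : ℕ) (n : ℤ) : ℝ :=
  (1/2^k : ℝ) * ∑ j ∈ Finset.range (k+1), if (2*j : ℤ) = k + n then (k.choose j : ℝ) else 0

lemma muCoef_nonneg (k : ℕ) (n : ℤ) : 0 ≤ muCoef k n := by
  apply mul_nonneg (by positivity)
  apply Finset.sum_nonneg
  intro j _
  split_ifs <;> positivity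

lemma muCoef_le_one (k : ℕ) (n : ℤ) : muCoef k n ≤ 1 := by
  rw [muCoef]
  rw [div_mul_eq_mul_div, one_mul, div_le_one (by positivity)]
  calc (∑ j ∈ Finset.range (k+1), if (2*j : ℤ) = k + n then (k.choose j : ℝ) else 0)
      ≤ ∑ j ∈ Finset.range (k+1), (k.choose j : ℝ) := by
        apply Finset.sum_le_sum
        intro j _
        split_ifs <;> simp
    _ = 2^k := by exact_mod_cast Nat.sum_range_choose k

lemma muCoef_natAbs_pos {n : ℤ} (hn : n ≠ 0) : (1:ℝ)/2^n.natAbs ≤ muCoef n.natAbs n := by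
  rw [muCoef]
  rcases lt_or_gt_of_ne hn with h | h
  · -- n < 0 : j = 0 works
    have hj : ((2*0 : ℤ) = (n.natAbs : ℤ) + n) := by omega
    have : (1:ℝ) ≤ ∑ j ∈ Finset.range (n.natAbs+1),
        if (2*j : ℤ) = (n.natAbs : ℤ) + n then (n.natAbs.choose j : ℝ) else 0 := by
      have h0 : (0:ℕ) ∈ Finset.range (n.natAbs+1) := by simp
      calc (1:ℝ) = if (2*(0:ℕ) : ℤ) = (n.natAbs : ℤ) + n then (n.natAbs.choose 0 : ℝ) else 0 := by
            rw [if_pos (by exact_mod_cast hj)]; simp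
        _ ≤ _ := by
            apply Finset.single_le_sum (f := fun (j:ℕ) => if (2*(j:ℤ) : ℤ) = (n.natAbs : ℤ) + n
              then (n.natAbs.choose j : ℝ) else 0) ?_ h0
            intro j _
            split_ifs <;> positivity
    rw [div_mul_eq_mul_div, one_mul, le_div_iff₀ (by positivity), one_div]
    rw [inv_mul_eq_div, div_le_iff₀ (by positivity)]
    calc (2:ℝ)^n.natAbs = 1 * 2^n.natAbs := (one_mul _).symm
      _ ≤ _ := by
        apply mul_le_mul_of_nonneg_right this (by positivity)
  · -- n > 0 : j = natAbs works
    have hj : ((2*(n.natAbs:ℤ) : ℤ) = (n.natAbs : ℤ) + n) := by omega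
    have : (1:ℝ) ≤ ∑ j ∈ Finset.range (n.natAbs+1),
        if (2*j : ℤ) = (n.natAbs : ℤ) + n then (n.natAbs.choose j : ℝ) else 0 := by
      have h0 : n.natAbs ∈ Finset.range (n.natAbs+1) := by simp
      calc (1:ℝ) = if (2*(n.natAbs:ℕ) : ℤ) = (n.natAbs : ℤ) + n
            then (n.natAbs.choose n.natAbs : ℝ) else 0 := by
            rw [if_pos (by exact_mod_cast hj)]; simp
        _ ≤ _ := by
            apply Finset.single_le_sum (f := fun (j:ℕ) => if (2*(j:ℤ) : ℤ) = (n.natAbs : ℤ) + n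
              then (n.natAbs.choose j : ℝ) else 0) ?_ h0
            intro j _
            split_ifs <;> positivity
    rw [div_mul_eq_mul_div, one_mul, le_div_iff₀ (by positivity), one_div]
    rw [inv_mul_eq_div, div_le_iff₀ (by positivity)]
    calc (2:ℝ)^n.natAbs = 1 * 2^n.natAbs := (one_mul _).symm
      _ ≤ _ := by
        apply mul_le_mul_of_nonneg_right this (by positivity)

lemma cos_pow_expand (k : ℕ) (n : ℤ) (θ : ℝ) :
    ((Real.cos θ : ℝ) : ℂ)^k * Complex.exp (-(n:ℂ) * θ * I)
      = ∑ j ∈ Finset.range (k+1), ((k.choose j : ℂ)/2^k)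
          * Complex.exp (((2*(j:ℤ) - k - n : ℤ) : ℂ) * θ * I) := by
  have hcos : ((Real.cos θ : ℝ) : ℂ)
      = (Complex.exp ((θ:ℂ)*I) + Complex.exp (-(θ:ℂ)*I))/2 := by
    rw [Complex.ofReal_cos, Complex.cos]
  rw [hcos, div_pow, add_pow]
  rw [Finset.sum_div, Finset.sum_mul]
  apply Finset.sum_congr rfl
  intro j hj
  have hjk : j ≤ k := by
    simpa using Nat.lt_succ_iff.mp (Finset.mem_range.mp hj)
  have harg : (j:ℂ) * ((θ:ℂ)*I) + ((k - j : ℕ):ℂ) * (-(θ:ℂ)*I) + (-(n:ℂ) * θ * I)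
      = ((2*(j:ℤ) - k - n : ℤ) : ℂ) * θ * I := by
    have hkj : ((k - j : ℕ) : ℂ) = (k : ℂ) - (j : ℂ) := by
      push_cast [Nat.cast_sub hjk]; ring
    rw [hkj]
    push_cast
    ring
  have e1 : Complex.exp ((θ:ℂ)*I) ^ j = Complex.exp ((j:ℂ) * ((θ:ℂ)*I)) := by
    rw [← Complex.exp_nat_mul]
  have e2 : Complex.exp (-(θ:ℂ)*I) ^ (k-j) = Complex.exp (((k-j:ℕ):ℂ) * (-(θ:ℂ)*I)) := by
    rw [← Complex.exp_nat_mul]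
  have hmerge : Complex.exp (((2*(j:ℤ) - k - n : ℤ):ℂ) * θ * I)
      = Complex.exp ((j:ℂ)*((θ:ℂ)*I)) * Complex.exp (((k-j:ℕ):ℂ)*(-(θ:ℂ)*I))
        * Complex.exp (-(n:ℂ)*θ*I) := by
    rw [← Complex.exp_add, ← Complex.exp_add, harg]
  rw [hmerge, e1, e2]
  ring

lemma cos_pow_integral (k : ℕ) (n : ℤ) :
    ∫ θ in (0:ℝ)..(2*π), ((Real.cos θ : ℝ) : ℂ)^k * Complex.exp (-(n:ℂ) * θ * I)
      = ((2 * π * muCoef k n : ℝ) : ℂ) := by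
  have h1 : ∀ θ : ℝ, ((Real.cos θ : ℝ) : ℂ)^k * Complex.exp (-(n:ℂ) * θ * I)
      = ∑ j ∈ Finset.range (k+1), ((k.choose j : ℂ)/2^k)
          * Complex.exp (((2*(j:ℤ) - k - n : ℤ) : ℂ) * θ * I) := cos_pow_expand k n
  simp_rw [h1]
  rw [intervalIntegral.integral_finset_sum]
  · have h2 : ∀ j ∈ Finset.range (k+1),
        (∫ θ in (0:ℝ)..(2*π), ((k.choose j : ℂ)/2^k)
          * Complex.exp (((2*(j:ℤ) - k - n : ℤ) : ℂ) * θ * I))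
        = ((k.choose j : ℂ)/2^k) * (if (2*(j:ℤ) - k - n : ℤ) = 0 then ((2*π:ℝ):ℂ) else 0) := by
      intro j _
      rw [intervalIntegral.integral_const_mul, intExp]
    rw [Finset.sum_congr rfl h2]
    rw [muCoef]
    push_cast
    rw [Finset.mul_sum, Finset.mul_sum]
    apply Finset.sum_congr rfl
    intro j _
    have hiff : ((2*(j:ℤ) - k - n : ℤ) = 0) ↔ ((2*j : ℤ) = k + n) := by omega
    split_ifs with h h' h'
    · push_cast
      ring
    · exact absurd (hiff.mp h) h'
    · exact absurd (hiff.mpr h') h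
    · simp
  · intro j _
    apply Continuous.intervalIntegrable
    fun_prop

open Complex Real MeasureTheory

lemma f_eq (p : ℝ) (θ : ℝ) :
    ‖(Complex.exp ((θ:ℂ) * I) - 1)/2‖ ^ p
      = ((1 - Real.cos θ)/2) ^ (p/2) := by
  have h1 : Complex.exp ((θ:ℂ)*I) - 1
      = ((Real.cos θ - 1 : ℝ) : ℂ) + ((Real.sin θ : ℝ):ℂ) * I := by
    rw [Complex.exp_mul_I, ← Complex.ofReal_cos, ← Complex.ofReal_sin]
    push_cast
    ring
  have h2 : ‖Complex.exp ((θ:ℂ)*I) - 1‖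
      = Real.sqrt ((Real.cos θ - 1)^2 + (Real.sin θ)^2) := by
    rw [h1, Complex.norm_add_mul_I]
  have h3 : (Real.cos θ - 1)^2 + (Real.sin θ)^2 = 2 - 2 * Real.cos θ := by
    nlinarith [Real.sin_sq_add_cos_sq θ]
  have h4 : ‖(Complex.exp ((θ:ℂ) * I) - 1)/2‖
      = Real.sqrt ((1 - Real.cos θ)/2) := by
    rw [norm_div, h2, h3]
    have : ‖(2:ℂ)‖ = Real.sqrt 4 := by
      rw [show (4:ℝ) = 2^2 by norm_num, Real.sqrt_sq (by norm_num : (0:ℝ) ≤ 2)]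
      simp
    have hnn : (0:ℝ) ≤ 2 - 2*Real.cos θ := by nlinarith [Real.cos_le_one θ]
    rw [this, ← Real.sqrt_div hnn]
    congr 1
    ring
  have hx : (0:ℝ) ≤ (1 - Real.cos θ)/2 := by
    have := Real.cos_le_one θ; linarith
  rw [h4, Real.sqrt_eq_rpow, ← Real.rpow_mul hx]
  congr 1
  ring

lemma ae_cos_lt_one : ∀ᵐ θ ∂(volume.restrict (Set.Ioc (0:ℝ) (2*π))), |Real.cos θ| < 1 := by
  have hnull : volume ({θ : ℝ | ¬ |Real.cos θ| < 1} ∩ Set.Ioc (0:ℝ) (2*π)) = 0 := by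
    refine measure_mono_null (t := ({π, 2*π} : Set ℝ)) ?_ ?_
    · rintro θ ⟨h1, h2⟩
      have hc : |Real.cos θ| = 1 := by
        have := Real.abs_cos_le_one θ
        simp only [Set.mem_setOf_eq, not_lt] at h1
        linarith
      have hs : Real.sin θ = 0 := by
        have := Real.sin_sq_add_cos_sq θ
        have h2 : (Real.cos θ)^2 = 1 := by
          rw [← _root_.sq_abs, hc]; norm_num
        nlinarith
      obtain ⟨n, hnθ⟩ := Real.sin_eq_zero_iff.mp hs
      simp only [Set.mem_Ioc] at h2
      have hπ := Real.pi_pos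
      have hn1 : (0:ℤ) < n := by
        by_contra h
        push_neg at h
        have : (n:ℝ) * π ≤ 0 := mul_nonpos_of_nonpos_of_nonneg (by exact_mod_cast h) hπ.le
        linarith [h2.1, hnθ]
      have hn2 : n ≤ 2 := by
        by_contra h
        push_neg at h
        have h3 : (3:ℝ) ≤ (n:ℝ) := by exact_mod_cast h
        nlinarith [h2.2, hnθ]
      simp only [Set.mem_insert_iff, Set.mem_singleton_iff]
      interval_cases n
      · left; rw [← hnθ]; push_cast; ring
      · right; rw [← hnθ]; push_cast; ring
    · exact ((Set.finite_singleton (2*π)).insert π).measure_zero _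
  rw [MeasureTheory.ae_restrict_iff' measurableSet_Ioc]
  rw [MeasureTheory.ae_iff]
  convert hnull using 2
  ext θ
  simp only [Set.mem_setOf_eq, Set.mem_inter_iff]
  tauto

noncomputable def wCoef (s : ℝ) (n : ℤ) (k : ℕ) : ℝ :=
  binCoef s k * (-1)^k * (2*Real.pi*muCoef k n) / 2^s

section Glue
open Complex Real MeasureTheory
variable {s : ℝ}

lemma term_integral (s : ℝ) (n : ℤ) (k : ℕ) :
    (∫ θ in (0:ℝ)..(2*π),
        ((binCoef s k * (-Real.cos θ)^k / 2^s : ℝ) : ℂ) * Complex.exp (-(n:ℂ) * θ * I))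
      = ((wCoef s n k : ℝ) : ℂ) := by
  have hptw : ∀ θ : ℝ, ((binCoef s k * (-Real.cos θ)^k / 2^s : ℝ) : ℂ)
        * Complex.exp (-(n:ℂ) * θ * I)
      = ((binCoef s k * (-1)^k / 2^s : ℝ) : ℂ)
        * (((Real.cos θ : ℝ) : ℂ)^k * Complex.exp (-(n:ℂ) * θ * I)) := by
    intro θ
    push_cast
    ring
  rw [intervalIntegral.integral_congr (fun θ _ => hptw θ),
    intervalIntegral.integral_const_mul, cos_pow_integral k n, wCoef]
  push_cast
  ring

lemma wCoef_nonpos (hs0 : 0 < s) (hs1 : s < 1) (n : ℤ) (k : ℕ) :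
    wCoef s n k ≤ 0 ∨ k = 0 := by
  rcases Nat.eq_zero_or_pos k with h | h
  · exact Or.inr h
  · left
    rw [wCoef]
    have h1 := binCoef_sign hs0 hs1 k h
    have h2 := muCoef_nonneg k n
    have h3 : (0:ℝ) < 2^s := Real.rpow_pos_of_pos (by norm_num) s
    have hπ := Real.pi_pos
    apply div_nonpos_of_nonpos_of_nonneg _ h3.le
    have : binCoef s k * (-1)^k = (-1:ℝ)^k * binCoef s k := by ring
    rw [this]
    apply mul_nonpos_of_nonpos_of_nonneg h1.le
    positivity

lemma wCoef_zero (n : ℤ) (hn : n ≠ 0) : wCoef s n 0 = 0 := by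
  rw [wCoef, muCoef]
  have : ∑ j ∈ Finset.range 1, (if (2*(j:ℤ) : ℤ) = (0:ℕ) + n then ((0:ℕ).choose j : ℝ) else 0)
      = 0 := by
    rw [Finset.sum_range_one, if_neg]
    simpa using fun h => hn (by omega)
  rw [this]
  ring

lemma wCoef_natAbs_neg (hs0 : 0 < s) (hs1 : s < 1) {n : ℤ} (hn : n ≠ 0) :
    wCoef s n n.natAbs < 0 := by
  have hk : 1 ≤ n.natAbs := by
    rcases Int.natAbs_eq_zero.symm.not.mp  (by simpa using hn) with _
    omega
  rw [wCoef]
  have h1 := binCoef_sign hs0 hs1 n.natAbs hk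
  have h2 := muCoef_natAbs_pos hn
  have h3 : (0:ℝ) < 2^s := Real.rpow_pos_of_pos (by norm_num) s
  have hπ := Real.pi_pos
  apply div_neg_of_neg_of_pos _ h3
  have heq : binCoef s n.natAbs * (-1)^n.natAbs = (-1:ℝ)^n.natAbs * binCoef s n.natAbs := by ring
  rw [heq]
  apply mul_neg_of_neg_of_pos h1
  have : (0:ℝ) < 1/2^n.natAbs := by positivity
  nlinarith

lemma summable_wCoef (hs0 : 0 < s) (hs1 : s < 1) (n : ℤ) :
    Summable (wCoef s n) := by
  have h3 : (0:ℝ) < 2^s := Real.rpow_pos_of_pos (by norm_num) s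
  apply Summable.of_norm_bounded (((summable_abs_binCoef hs0 hs1).mul_right (2*π)).div_const
    (2^s))
  intro k
  rw [wCoef, norm_div, norm_mul, norm_mul]
  have hπ := Real.pi_pos
  have h4 : ‖(2:ℝ)^s‖ = 2^s := by rw [Real.norm_eq_abs, abs_of_pos h3]
  have h5 : ‖((-1:ℝ))^k‖ = 1 := by rw [norm_pow]; simp
  rw [h4, h5, mul_one]
  apply (div_le_div_iff_of_pos_right h3).mpr
  have h6 : ‖2*π*muCoef k n‖ ≤ 2*π := by
    have hπ := Real.pi_pos
    rw [Real.norm_eq_abs, _root_.abs_of_nonneg (mul_nonneg (by positivity) (muCoef_nonneg k n))]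
    nlinarith [muCoef_le_one k n, muCoef_nonneg k n]
  calc ‖binCoef s k‖ * ‖2*π*muCoef k n‖ ≤ ‖binCoef s k‖ * (2*π) :=
        mul_le_mul_of_nonneg_left h6 (norm_nonneg _)
    _ = |binCoef s k| * (2*π) := rfl

lemma tsum_wCoef_neg (hs0 : 0 < s) (hs1 : s < 1) {n : ℤ} (hn : n ≠ 0) :
    ∑' k, wCoef s n k < 0 := by
  have hsum := summable_wCoef hs0 hs1 n
  have h := Summable.tsum_lt_tsum (f := wCoef s n) (g := fun _ => (0:ℝ)) (i := n.natAbs)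
    ?_ ?_ hsum summable_zero
  · simpa using h
  · intro k
    rcases wCoef_nonpos hs0 hs1 n k with h | h
    · exact h
    · rw [h, wCoef_zero n hn]
  · exact wCoef_natAbs_neg hs0 hs1 hn

end Glue
section KeySum
open Complex Real MeasureTheory
variable {s : ℝ}

lemma key_sum (hs0 : 0 < s) (hs1 : s < 1) (n : ℤ) :
    (∫ θ in (0:ℝ)..(2*π), ((((1 - Real.cos θ)/2)^s : ℝ) : ℂ) * Complex.exp (-(n:ℂ) * θ * I))
      = ((∑' k, wCoef s n k : ℝ) : ℂ) := by
  have hπ := Real.pi_pos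
  have h2s : (0:ℝ) < 2^s := Real.rpow_pos_of_pos (by norm_num) s
  set F : ℕ → ℝ → ℂ := fun k θ =>
    ((binCoef s k * (-Real.cos θ)^k / 2^s : ℝ) : ℂ) * Complex.exp (-(n:ℂ) * θ * I) with hFdef
  have hFcont : ∀ k, Continuous (F k) := by
    intro k
    rw [hFdef]
    apply Continuous.mul
    · apply Complex.continuous_ofReal.comp
      fun_prop
    · apply Complex.continuous_exp.comp
      fun_prop
  have hFint : ∀ k, IntegrableOn (F k) (Set.Ioc (0:ℝ) (2*π)) volume :=
    fun k => (hFcont k).integrableOn_Ioc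
  have hEnorm : ∀ θ : ℝ, ‖Complex.exp (-(n:ℂ) * θ * I)‖ = 1 := by
    intro θ
    have harg : -(n:ℂ) * θ * I = (((-n*θ : ℝ)) : ℂ) * I := by push_cast; ring
    rw [harg]
    exact Complex.norm_exp_ofReal_mul_I _
  have hnorm : ∀ k θ, ‖F k θ‖ ≤ |binCoef s k| / 2^s := by
    intro k θ
    rw [hFdef]
    simp only [norm_mul]
    rw [hEnorm θ, mul_one, Complex.norm_real, Real.norm_eq_abs, abs_div, abs_mul]
    rw [_root_.abs_of_pos h2s]
    apply (div_le_div_iff_of_pos_right h2s).mpr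
    have h1 : |(-Real.cos θ)^k| ≤ 1 := by
      rw [_root_.abs_pow]
      apply pow_le_one₀ (abs_nonneg _)
      rw [_root_.abs_neg]
      exact Real.abs_cos_le_one θ
    nlinarith [abs_nonneg (binCoef s k)]
  have hFsumnorm : Summable (fun k => ∫ θ in Set.Ioc (0:ℝ) (2*π), ‖F k θ‖) := by
    apply Summable.of_nonneg_of_le (fun k => integral_nonneg fun θ => norm_nonneg _) ?_
      (((summable_abs_binCoef hs0 hs1).div_const (2^s)).mul_right (2*π))
    intro k
    have hle : (∫ θ in Set.Ioc (0:ℝ) (2*π), ‖F k θ‖)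
        ≤ ∫ _ in Set.Ioc (0:ℝ) (2*π), (|binCoef s k| / 2^s) :=
      integral_mono (hFint k).norm (integrable_const _) (fun θ => hnorm k θ)
    have hconst : (∫ _ in Set.Ioc (0:ℝ) (2*π), (|binCoef s k| / 2^s))
        = |binCoef s k| / 2^s * (2*π) := by
      rw [integral_const, measureReal_restrict_apply_univ, measureReal_def, Real.volume_Ioc, smul_eq_mul,
        ENNReal.toReal_ofReal (by linarith), mul_comm]
      norm_num
    rw [hconst] at hle
    exact hle
  have hHasSum := hasSum_integral_of_summable_integral_norm hFint hFsumnorm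
  have hae : (∫ θ in Set.Ioc (0:ℝ) (2*π), ∑' k, F k θ)
      = ∫ θ in Set.Ioc (0:ℝ) (2*π), ((((1 - Real.cos θ)/2)^s : ℝ) : ℂ)
          * Complex.exp (-(n:ℂ) * θ * I) := by
    apply integral_congr_ae
    filter_upwards [ae_cos_lt_one] with θ hθ
    have hx : |(-Real.cos θ)| < 1 := by rwa [abs_neg]
    have h1 := binomial_hasSum hs0 hs1 hx
    rw [show (1 + -Real.cos θ) = 1 - Real.cos θ by ring] at h1
    have h2 := h1.div_const ((2:ℝ)^s)
    have h3 := (Complex.hasSum_ofReal.mpr h2).mul_right (Complex.exp (-(n:ℂ) * θ * I))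
    have h4 : ((1 - Real.cos θ)/2)^s = (1 - Real.cos θ)^s / 2^s :=
      Real.div_rpow (by nlinarith [Real.cos_le_one θ]) (by norm_num : (0:ℝ) ≤ 2) s
    rw [h4]
    exact h3.tsum_eq
  have hterm : ∀ k, (∫ θ in Set.Ioc (0:ℝ) (2*π), F k θ) = ((wCoef s n k : ℝ) : ℂ) := by
    intro k
    rw [← intervalIntegral.integral_of_le (by linarith : (0:ℝ) ≤ 2*π)]
    exact term_integral s n k
  have hHasSum2 : HasSum (fun k => ((wCoef s n k : ℝ) : ℂ))
      (∫ θ in Set.Ioc (0:ℝ) (2*π), ∑' k, F k θ) := by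
    have := hHasSum
    simp only [hterm] at this
    exact this
  have hHasSum3 : HasSum (fun k => ((wCoef s n k : ℝ) : ℂ))
      (((∑' k, wCoef s n k : ℝ)) : ℂ) :=
    Complex.hasSum_ofReal.mpr (summable_wCoef hs0 hs1 n).hasSum
  have huniq := hHasSum2.unique hHasSum3
  rw [intervalIntegral.integral_of_le (by linarith : (0:ℝ) ≤ 2*π), ← hae, huniq]

end KeySum

theorem stmt_14 (p : ℝ) (hp : p ∈ Set.Ico (1:ℝ) 2) :
    (∃ c : ℝ, 0 < c ∧
        circleFourierCoeff (fun z => (‖(z - 1) / 2‖)^p) 0 = (c : ℂ))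
    ∧ ∀ n : ℤ, n ≠ 0 → ∃ c : ℝ, c < 0 ∧
        circleFourierCoeff (fun z => (‖(z - 1) / 2‖)^p) n = (c : ℂ) := by
  obtain ⟨hp1, hp2⟩ := hp
  have hπ := Real.pi_pos
  set s : ℝ := p/2 with hsdef
  have hs0 : 0 < s := by rw [hsdef]; linarith
  have hs1 : s < 1 := by rw [hsdef]; linarith
  have hcoeff : ∀ n : ℤ, circleFourierCoeff (fun z => (‖(z - 1) / 2‖)^p) n
      = (1 / (2 * Real.pi) : ℂ) * ∫ θ in (0:ℝ)..(2*Real.pi),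
          ((((1 - Real.cos θ)/2)^s : ℝ) : ℂ) * Complex.exp (-(n:ℂ) * θ * Complex.I) := by
    intro n
    rw [circleFourierCoeff]
    congr 1
    apply intervalIntegral.integral_congr
    intro θ _
    congr 2
    simp only []
    rw [f_eq p θ]
  constructor
  · rw [hcoeff 0]
    have hsimp : ∀ θ : ℝ, ((((1 - Real.cos θ)/2)^s : ℝ) : ℂ)
        * Complex.exp (-(((0:ℤ)):ℂ) * θ * Complex.I)
        = ((((1 - Real.cos θ)/2)^s : ℝ) : ℂ) := by
      intro θ; simp
    rw [intervalIntegral.integral_congr (fun θ _ => hsimp θ),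
      intervalIntegral.integral_ofReal]
    set Ig := ∫ θ in (0:ℝ)..(2*Real.pi), ((1 - Real.cos θ)/2)^s with hIg
    have hpos : 0 < Ig := by
      rw [hIg]
      apply intervalIntegral.intervalIntegral_pos_of_pos_on
      · apply ContinuousOn.intervalIntegrable
        apply Continuous.continuousOn
        apply Continuous.rpow_const (by fun_prop)
        intro θ; right; exact hs0.le
      · intro θ hθ
        apply Real.rpow_pos_of_pos
        have h1 : Real.cos θ < 1 := by
          rcases lt_or_eq_of_le (Real.cos_le_one θ) with h | h
          · exact h
          · exfalso
            obtain ⟨m, hm⟩ := (Real.cos_eq_one_iff θ).mp h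
            have h0 : (0:ℝ) < (m:ℝ) * (2*Real.pi) := by rw [hm]; exact hθ.1
            have hm1 : (1:ℝ) ≤ (m:ℝ) := by
              have : (0:ℤ) < m := by
                by_contra hc
                push_neg at hc
                have : (m:ℝ) ≤ 0 := by exact_mod_cast hc
                nlinarith
              exact_mod_cast this
            nlinarith [hθ.2]
        linarith
      · linarith
    refine ⟨Ig / (2*Real.pi), by positivity, ?_⟩
    rw [Complex.ofReal_div]
    push_cast
    ring
  · intro n hn
    rw [hcoeff n, key_sum hs0 hs1 n]
    have hneg := tsum_wCoef_neg hs0 hs1 hn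
    refine ⟨(∑' k, wCoef s n k) / (2*Real.pi), ?_, ?_⟩
    · exact div_neg_of_neg_of_pos hneg (by positivity)
    · rw [Complex.ofReal_div]
      push_cast
      ring
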